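/- Let f_102 be the local rule f_102(a,b,c) = b + c. For every integer n ≥ 1 and every a ∈ Q, none of the transition functions (f_102)_{(n),a-*}, (f_102)_{(n),*-*}, (f_102)_{(n),*} on Q^n is bijective; that is, CA-102_{a-*}(n), CA-102_{*-*}(n) and CA-102_{*}(n) are not reversible for any positive integer n. -/
import Mathlib


/-- The state set `Q = {0,1}` as `ZMod 2`. -/
abbrev Q : Type := ZMod 2

/-- A triplet local rule `f : Q³ → Q`. -/
abbrev Rule : Type := Q → Q → Q → Q

/-- A configuration of length `n`. -/
abbrev Config (n : ℕ) : Type := Fin n → Q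

/-- The transition sending `x` to the word whose `i`-th letter is
`f (x (i-1)) (x i) (x (i+1))`, where the virtual boundary letters
`x₀` and `x_{n+1}` are given as `x0` and `xn1`. -/
def caTrans {n : ℕ} (f : Rule) (x0 xn1 : Q) (x : Config n) : Config n :=
  fun i =>
    f (if _h : i.1 = 0 then x0
       else x ⟨i.1 - 1, Nat.lt_of_le_of_lt (Nat.sub_le _ _) i.isLt⟩)
      (x i)
      (if h : i.1 + 1 < n then x ⟨i.1 + 1, h⟩ else xn1)

/-- The first letter `x₁` of a nonempty configuration. -/
def firstCell {n : ℕ} (hn : 0 < n) (x : Config n) : Q := x ⟨0, hn⟩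

/-- The last letter `xₙ` of a nonempty configuration. -/
def lastCell {n : ℕ} (hn : 0 < n) (x : Config n) : Q :=
  x ⟨n - 1, Nat.sub_lt hn Nat.one_pos⟩

/-- Fixed boundary `a-b` : `x₀ = a`, `x_{n+1} = b`. -/
def fixedBC {n : ℕ} (f : Rule) (a b : Q) : Config n → Config n :=
  fun x => caTrans f a b x

/-- Boundary `a-*` : `x₀ = a`, `x_{n+1} = xₙ`. -/
def leftFixedBC {n : ℕ} (hn : 0 < n) (f : Rule) (a : Q) : Config n → Config n :=
  fun x => caTrans f a (lastCell hn x) x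

/-- Boundary `*-b` : `x₀ = x₁`, `x_{n+1} = b`. -/
def rightFixedBC {n : ℕ} (hn : 0 < n) (f : Rule) (b : Q) : Config n → Config n :=
  fun x => caTrans f (firstCell hn x) b x

/-- Free boundary `*-*` : `x₀ = x₁`, `x_{n+1} = xₙ`. -/
def freeBC {n : ℕ} (hn : 0 < n) (f : Rule) : Config n → Config n :=
  fun x => caTrans f (firstCell hn x) (lastCell hn x) x

/-- Cyclic boundary `*` : `x₀ = xₙ`, `x_{n+1} = x₁`. -/
def cyclicBC {n : ℕ} (hn : 0 < n) (f : Rule) : Config n → Config n :=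
  fun x => caTrans f (lastCell hn x) (firstCell hn x) x

/-- Rule 102 : `f(a,b,c) = b + c`. -/
def f102 : Rule := fun _ b c => b + c

theorem statement13 (n : ℕ) (hn : 1 ≤ n) (a : Q) :
    ¬ Function.Bijective (leftFixedBC hn f102 a) ∧
    ¬ Function.Bijective (freeBC hn f102) ∧
    ¬ Function.Bijective (cyclicBC hn f102) := by
  have hne : (fun _ => (1:Q) : Config n) ≠ (fun _ => (0:Q)) := by
    intro h
    have := congrFun h ⟨0, hn⟩
    exact one_ne_zero this
  refine ⟨?_, ?_, ?_⟩ <;> rintro ⟨hinj, -⟩ <;> apply hne <;> apply hinj <;>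
    funext i <;>
    simp only [leftFixedBC, freeBC, cyclicBC, caTrans, f102, lastCell, firstCell] <;>
    split_ifs <;> decide
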